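/- Let X be a p-variate mean-zero Gaussian-type second-order process with stationary increments, X(0)=0, vector self-similar with exponents H₁,...,H_p ∈ (0,1), such that t ↦ E[X_i(t)X_j(1)] is continuously differentiable on (0,1)∪(1,∞) for all i,j. If i ≠ j and H_i + H_j ≠ 1, then there exist constants c_{ij}, c_{ji} ∈ ℝ such that for all s,t ∈ ℝ, E[X_i(s)X_j(t)] = (σ_iσ_j/2){c_{ij}(s)|s|^{H_i+H_j} + c_{ji}(t)|t|^{H_i+H_j} - c_{ji}(t-s)|t-s|^{H_i+H_j}}, where c_{ij}(u) := c_{ij} if u > 0 and c_{ji} if u < 0, and σ_i² = Var(X_i(1)). -/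

import Mathlib

/-- Main theorem (case H_i + H_j ≠ 1), at the level of the cross-covariance function
r(s,t) = E[X_i(s)X_j(t)]: if r is jointly continuous, vanishes on the axes, satisfies the
self-similarity scaling with exponent H_i + H_j and the stationary-increment relation, and
t ↦ r(t,1) is C¹ on (0,1) ∪ (1,∞), then there exist c_{ij}, c_{ji} ∈ ℝ with
r(s,t) = (σᵢσⱼ/2){c_{ij}(s)|s|^{H_i+H_j} + c_{ji}(t)|t|^{H_i+H_j} - c_{ji}(t-s)|t-s|^{H_i+H_j}}. -/
theorem cross_covariance_form (Hi Hj σi σj : ℝ)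
    (hHi : Hi ∈ Set.Ioo (0 : ℝ) 1) (hHj : Hj ∈ Set.Ioo (0 : ℝ) 1)
    (hsum : Hi + Hj ≠ 1) (hσi : 0 < σi) (hσj : 0 < σj)
    (r : ℝ → ℝ → ℝ)
    (hcont : Continuous fun p : ℝ × ℝ => r p.1 p.2)
    (haxes : ∀ s t : ℝ, r s 0 = 0 ∧ r 0 t = 0)
    (hscale : ∀ lam : ℝ, 0 < lam → ∀ s t : ℝ,
      r (lam * s) (lam * t) = lam ^ (Hi + Hj) * r s t)
    (hincr : ∀ s t T : ℝ, r s t = r (s + T) (t + T) - r (s + T) T - r T (t + T) + r T T)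
    (hdiff : ContDiffOn ℝ 1 (fun t => r t 1) (Set.Ioo 0 1 ∪ Set.Ioi 1)) :
    ∃ cij cji : ℝ, ∀ s t : ℝ,
      r s t = σi * σj / 2 *
        ((if 0 < s then cij else cji) * |s| ^ (Hi + Hj)
          + (if 0 < t then cji else cij) * |t| ^ (Hi + Hj)
          - (if 0 < t - s then cji else cij) * |t - s| ^ (Hi + Hj)) := by
  classical
  obtain ⟨hHi0, hHi1⟩ := hHi
  obtain ⟨hHj0, hHj1⟩ := hHj
  set H := Hi + Hj with hHdef
  have hH0 : 0 < H := by rw [hHdef]; linarith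
  have hHne : H ≠ 0 := ne_of_gt hH0
  have hax1 : ∀ s : ℝ, r s 0 = 0 := fun s => (haxes s 0).1
  have hax2 : ∀ t : ℝ, r 0 t = 0 := fun t => (haxes 0 t).2
  -- translation identity from stationary increments
  have L1 : ∀ a y k : ℝ, r y k = r a k + r (y - a) (k - a) - r (y - a) (-a) := by
    intro a y k
    have i1 := hincr (y - a) (k - a) a
    have i2 := hincr (y - a) (-a) a
    rw [show y - a + a = y by ring, show k - a + a = k by ring] at i1
    rw [show y - a + a = y by ring, show -a + a = 0 by ring] at i2
    rw [hax1 y, hax1 a] at i2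
    linarith
  -- second-argument sign flip
  have L3 : ∀ a c : ℝ, r a c = r (-c) (-c) - r (a - c) (-c) := by
    intro a c
    have i := hincr a c (-c)
    rw [show c + -c = 0 by ring, show a + -c = a - c by ring] at i
    rw [hax1 (a - c), hax1 (-c)] at i
    linarith
  -- scaling of slices
  have hs1 : ∀ z : ℝ, 0 < z → ∀ h : ℝ, r h z = z ^ H * r (h / z) 1 := by
    intro z hz h
    have e := hscale z hz (h / z) 1
    rw [mul_one, show z * (h / z) = h by field_simp] at e
    exact e
  have hSopen : IsOpen (Set.Ioo (0:ℝ) 1 ∪ Set.Ioi 1) := isOpen_Ioo.union isOpen_Ioi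
  have hbase : ∀ x : ℝ, x ∈ Set.Ioo (0:ℝ) 1 ∪ Set.Ioi 1 →
      DifferentiableAt ℝ (fun t => r t 1) x :=
    fun x hx => (hdiff.differentiableOn one_ne_zero).differentiableAt (hSopen.mem_nhds hx)
  -- every slice (fun h => r h z) is differentiable at 1, for z ≠ 1
  have keyA : ∀ z : ℝ, z ≠ 1 → DifferentiableAt ℝ (fun h => r h z) 1 := by
    intro z hz1
    rcases lt_trichotomy z 0 with hz | hz | hz
    · have hτ : 0 < -z := by linarith
      have funeq : (fun h => r h z) = fun h => r (-z) (-z) - (-z) ^ H * r ((h - z) / -z) 1 := by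
        funext h
        rw [L3 h z, hs1 (-z) hτ (h - z)]
      rw [funeq]
      have hmem : (1 - z) / -z ∈ Set.Ioo (0:ℝ) 1 ∪ Set.Ioi 1 := by
        right
        rw [Set.mem_Ioi, lt_div_iff₀ hτ]
        linarith
      have hinner : DifferentiableAt ℝ (fun h : ℝ => (h - z) / -z) 1 :=
        (differentiableAt_id.sub_const z).div_const _
      have hcomp : DifferentiableAt ℝ (fun h : ℝ => r ((h - z) / -z) 1) 1 :=
        DifferentiableAt.comp 1 (hbase _ hmem) hinner
      exact (differentiableAt_const _).sub (hcomp.const_mul _)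
    · have funeq : (fun h => r h z) = fun _ => (0:ℝ) := by
        funext h; rw [hz, hax1]
      rw [funeq]
      exact differentiableAt_const _
    · have funeq : (fun h => r h z) = fun h => z ^ H * r (h / z) 1 :=
        funext fun h => hs1 z hz h
      rw [funeq]
      have hmem : 1 / z ∈ Set.Ioo (0:ℝ) 1 ∪ Set.Ioi 1 := by
        rcases lt_or_gt_of_ne hz1 with h1 | h1
        · right; rw [Set.mem_Ioi, lt_div_iff₀ hz]; linarith
        · left
          constructor
          · positivity
          · rw [div_lt_one hz]; linarith
      have hinner : DifferentiableAt ℝ (fun h : ℝ => h / z) 1 :=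
        differentiableAt_id.div_const _
      have hcomp : DifferentiableAt ℝ (fun h : ℝ => r (h / z) 1) 1 :=
        DifferentiableAt.comp 1 (hbase _ hmem) hinner
      exact hcomp.const_mul _
  set φ : ℝ → ℝ := fun z => deriv (fun h => r h z) 1 with hφdef
  have keyA' : ∀ z : ℝ, z ≠ 1 → HasDerivAt (fun h => r h z) (φ z) 1 :=
    fun z hz => (keyA z hz).hasDerivAt
  have hφ0 : φ 0 = 0 := by
    have funeq : (fun h : ℝ => r h 0) = fun _ => (0:ℝ) := funext fun h => hax1 h
    simp only [hφdef]
    rw [funeq]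
    simp
  -- master derivative formula
  have keyB : ∀ x k : ℝ, x ≠ 0 → k ≠ x →
      HasDerivAt (fun y => r y k) (φ (k - (x - 1)) - φ (-(x - 1))) x := by
    intro x k hx hkx
    have hz1 : k - (x - 1) ≠ 1 := fun h => hkx (by linarith)
    have hz2 : -(x - 1) ≠ 1 := fun h => hx (by linarith)
    have d1 : HasDerivAt (fun h => r h (k - (x - 1))) (φ (k - (x - 1))) (x - (x - 1)) := by
      rw [show x - (x - 1) = 1 by ring]; exact keyA' _ hz1
    have d2 : HasDerivAt (fun h => r h (-(x - 1))) (φ (-(x - 1))) (x - (x - 1)) := by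
      rw [show x - (x - 1) = 1 by ring]; exact keyA' _ hz2
    have hinner : HasDerivAt (fun y : ℝ => y - (x - 1)) 1 x := (hasDerivAt_id x).sub_const _
    have c1 : HasDerivAt (fun y => r (y - (x - 1)) (k - (x - 1))) (φ (k - (x - 1)) * 1) x :=
      by have := HasDerivAt.comp x d1 hinner; exact this
    have c2 : HasDerivAt (fun y => r (y - (x - 1)) (-(x - 1))) (φ (-(x - 1)) * 1) x :=
      by have := HasDerivAt.comp x d2 hinner; exact this
    have funeq : (fun y => r y k)
        = fun y => r (x - 1) k + (r (y - (x - 1)) (k - (x - 1)) - r (y - (x - 1)) (-(x - 1))) := by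
      funext y
      have := L1 (x - 1) y k
      linarith
    rw [funeq]
    have htot := (c1.sub c2).const_add (r (x - 1) k)
    have hval : φ (k - (x - 1)) * 1 - φ (-(x - 1)) * 1 = φ (k - (x - 1)) - φ (-(x - 1)) := by ring
    rw [hval] at htot
    exact htot
  -- scaling of derivatives
  have keyC : ∀ l : ℝ, 0 < l → ∀ x k d : ℝ, HasDerivAt (fun y => r y k) d x →
      HasDerivAt (fun y => r y (l * k)) (l ^ H * (d * (1 / l))) (l * x) := by
    intro l hl x k d hd
    have funeq : (fun y => r y (l * k)) = fun y => l ^ H * r (y / l) k := by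
      funext y
      have e := hscale l hl (y / l) k
      rw [show l * (y / l) = y by field_simp] at e
      exact e
    have hinner : HasDerivAt (fun y : ℝ => y / l) (1 / l) (l * x) := by
      simpa using (hasDerivAt_id (l * x)).div_const l
    have hd' : HasDerivAt (fun y => r y k) d (l * x / l) := by
      rw [show l * x / l = x by field_simp]
      exact hd
    have hcomp : HasDerivAt (fun y => r (y / l) k) (d * (1 / l)) (l * x) :=
      by have := HasDerivAt.comp (l * x) hd' hinner; exact this
    rw [funeq]
    exact hcomp.const_mul _
  -- the functional equation for φ
  have keyD : ∀ l m y : ℝ, 0 < l → m ≠ 0 → y ≠ 0 →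
      φ (1 + l * m) - φ (1 + l * y) = l ^ H * ((φ (1 + m) - φ (1 + y)) * (1 / l)) := by
    intro l m y hl hm hy
    have hx : (-y : ℝ) ≠ 0 := neg_ne_zero.mpr hy
    have hkx : (m - y : ℝ) ≠ -y := fun h => hm (by linarith)
    have h1 := keyB (-y) (m - y) hx hkx
    rw [show m - y - (-y - 1) = 1 + m by ring, show -(-y - 1) = 1 + y by ring] at h1
    have h2 := keyC l hl (-y) (m - y) _ h1
    have hx2 : (l * -y : ℝ) ≠ 0 := mul_ne_zero (ne_of_gt hl) hx
    have hkx2 : (l * (m - y) : ℝ) ≠ l * -y := by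
      intro h
      have := mul_left_cancel₀ (ne_of_gt hl) h
      exact hm (by linarith)
    have h3 := keyB (l * -y) (l * (m - y)) hx2 hkx2
    rw [show l * (m - y) - (l * -y - 1) = 1 + l * m by ring,
        show -(l * -y - 1) = 1 + l * y by ring] at h3
    exact h3.unique h2
  have hmul : ∀ l m : ℝ, 0 < l → m ≠ 0 →
      φ (1 + l * m) = l ^ H * (1 / l) * φ (1 + m)
        + (φ (1 + l) - l ^ H * (1 / l) * φ (1 + 1)) := by
    intro l m hl hm
    have h := keyD l m 1 hl hm one_ne_zero
    rw [mul_one] at h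
    linear_combination h
  have hsym : ∀ l ν : ℝ, 0 < l → 0 < ν →
      (φ (1 + l) - l ^ H * (1 / l) * φ (1 + 1)) * (ν ^ H * (1 / ν) - 1)
        = (φ (1 + ν) - ν ^ H * (1 / ν) * φ (1 + 1)) * (l ^ H * (1 / l) - 1) := by
    intro l ν hl hν
    have e1 := hmul l ν hl (ne_of_gt hν)
    have e2 := hmul ν l hν (ne_of_gt hl)
    rw [mul_comm ν l] at e2
    linear_combination e1 - e2
  have hμ2 : (2:ℝ) ^ H * (1 / 2) - 1 ≠ 0 := by
    intro h0
    have h2H : (2:ℝ) ^ H = 2 := by linarith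
    have h1 : (2:ℝ) ^ (1:ℝ) = 2 := Real.rpow_one 2
    rcases lt_trichotomy H 1 with hlt | heq | hgt
    · have := (Real.rpow_lt_rpow_left_iff one_lt_two).mpr hlt
      rw [h1, h2H] at this
      exact lt_irrefl _ this
    · exact hsum heq
    · have := (Real.rpow_lt_rpow_left_iff one_lt_two).mpr hgt
      rw [h1, h2H] at this
      exact lt_irrefl _ this
  set κ : ℝ := (φ (1 + 2) - 2 ^ H * (1 / 2) * φ (1 + 1)) / (2 ^ H * (1 / 2) - 1) with hκdef
  have hC : ∀ l : ℝ, 0 < l →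
      φ (1 + l) - l ^ H * (1 / l) * φ (1 + 1) = κ * (l ^ H * (1 / l) - 1) := by
    intro l hl
    have h := hsym l 2 hl two_pos
    rw [hκdef, div_mul_eq_mul_div, eq_div_iff hμ2]
    linear_combination h
  have hupos : ∀ w : ℝ, 0 < w →
      φ (1 + w) = (φ (1 + 1) + κ) * (w ^ H * (1 / w)) - κ := by
    intro w hw
    have h := hC w hw
    linear_combination h
  have huneg : ∀ w : ℝ, w < 0 →
      φ (1 + w) = κ * ((-w) ^ H * (1 / -w)) - κ := by
    intro w hw
    have hl : 0 < -w := by linarith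
    have h1 := hmul (-w) (-1) hl (by norm_num)
    rw [show (-w : ℝ) * -1 = w by ring, show (1:ℝ) + -1 = 0 by norm_num, hφ0] at h1
    have h2 := hC (-w) hl
    linear_combination h1 + h2
  set a : ℝ := φ (1 + 1) + κ with hadef
  set ψ : ℝ → ℝ := fun w => if 0 < w then a * (w ^ H * (1 / w)) else κ * ((-w) ^ H * (1 / -w))
    with hψdef
  have hψu : ∀ w : ℝ, w ≠ 0 → φ (1 + w) = ψ w - κ := by
    intro w hw
    rcases hw.lt_or_gt with h | h
    · simp only [hψdef]
      rw [if_neg (not_lt.mpr h.le)]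
      exact huneg w h
    · simp only [hψdef]
      rw [if_pos h]
      exact hupos w h
  set N : ℝ → ℝ := fun w => (a / H) * (max w 0) ^ H - (κ / H) * (max (-w) 0) ^ H with hNdef
  have hN0 : N 0 = 0 := by
    simp only [hNdef]
    norm_num [Real.zero_rpow hHne]
  have hNpos : ∀ w : ℝ, 0 < w → N w = (a / H) * w ^ H := by
    intro w hw
    simp only [hNdef]
    rw [max_eq_left hw.le, max_eq_right (by linarith : (-w:ℝ) ≤ 0), Real.zero_rpow hHne]
    ring
  have hNneg : ∀ w : ℝ, w < 0 → N w = -((κ / H) * (-w) ^ H) := by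
    intro w hw
    simp only [hNdef]
    rw [max_eq_right hw.le, max_eq_left (by linarith : (0:ℝ) ≤ -w), Real.zero_rpow hHne]
    ring
  have hrpc : Continuous fun x : ℝ => x ^ H := by
    rw [continuous_iff_continuousAt]
    intro x
    exact Real.continuousAt_rpow_const x H (Or.inr hH0.le)
  have hNcont : Continuous N := by
    rw [hNdef]
    exact (continuous_const.mul (hrpc.comp (continuous_id.max continuous_const))).sub
      (continuous_const.mul (hrpc.comp (continuous_neg.max continuous_const)))
  have hNd : ∀ w : ℝ, w ≠ 0 → HasDerivAt N (ψ w) w := by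
    intro w hw
    rcases hw.lt_or_gt with hneg | hpos
    · have hEq : N =ᶠ[nhds w] fun x : ℝ => -((κ / H) * (-x) ^ H) :=
        Filter.eventuallyEq_of_mem (Iio_mem_nhds hneg) fun x hx => hNneg x hx
      have houter : HasDerivAt (fun y : ℝ => y ^ H) (H * (-w) ^ (H - 1)) (-w) :=
        Real.hasDerivAt_rpow_const (Or.inl (by linarith : (-w:ℝ) ≠ 0))
      have hinner : HasDerivAt (fun x : ℝ => -x) (-1) w := (hasDerivAt_id w).neg
      have hcomp : HasDerivAt (fun x : ℝ => (-x) ^ H) (H * (-w) ^ (H - 1) * -1) w :=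
        HasDerivAt.comp w houter hinner
      have hder : HasDerivAt (fun x : ℝ => -((κ / H) * (-x) ^ H))
          (-(κ / H * (H * (-w) ^ (H - 1) * -1))) w := (hcomp.const_mul _).neg
      have final := hder.congr_of_eventuallyEq hEq
      have hval : -(κ / H * (H * (-w) ^ (H - 1) * -1)) = ψ w := by
        simp only [hψdef]
        have hwne : (-w:ℝ) ≠ 0 := by linarith
        rw [if_neg (not_lt.mpr hneg.le), Real.rpow_sub (by linarith : (0:ℝ) < -w),
          Real.rpow_one]
        field_simp
      rw [hval] at final
      exact final
    · have hEq : N =ᶠ[nhds w] fun x : ℝ => (a / H) * x ^ H :=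
        Filter.eventuallyEq_of_mem (Ioi_mem_nhds hpos) fun x hx => hNpos x hx
      have hder : HasDerivAt (fun x : ℝ => (a / H) * x ^ H) (a / H * (H * w ^ (H - 1))) w :=
        (Real.hasDerivAt_rpow_const (Or.inl (ne_of_gt hpos))).const_mul _
      have final := hder.congr_of_eventuallyEq hEq
      have hval : a / H * (H * w ^ (H - 1)) = ψ w := by
        simp only [hψdef]
        rw [if_pos hpos, Real.rpow_sub hpos, Real.rpow_one]
        field_simp
      rw [hval] at final
      exact final
  have hrd : ∀ t x : ℝ, x ≠ 0 → t ≠ x → HasDerivAt (fun y => r y t) (ψ (t - x) - ψ (-x)) x := by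
    intro t x hx htx
    have h := keyB x t hx htx
    rw [show t - (x - 1) = 1 + (t - x) by ring, show -(x - 1) = 1 + -x by ring] at h
    rw [hψu (t - x) (sub_ne_zero.mpr htx), hψu (-x) (neg_ne_zero.mpr hx)] at h
    have hval : ψ (t - x) - κ - (ψ (-x) - κ) = ψ (t - x) - ψ (-x) := by ring
    rw [hval] at h
    exact h
  -- main structural identity
  have main : ∀ s t : ℝ, r s t = N (-s) + N t - N (t - s) := by
    intro s t
    rcases eq_or_ne t 0 with rfl | ht
    · rw [hax1 s, hN0, show (0:ℝ) - s = -s by ring]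
      ring
    · set g : ℝ → ℝ := fun x => r x t - (N (-x) + N t - N (t - x)) with hgdef
      have hslice : Continuous fun x : ℝ => r x t :=
        hcont.comp (continuous_id.prodMk continuous_const)
      have hgc : Continuous g := by
        rw [hgdef]
        exact hslice.sub (((hNcont.comp continuous_neg).add continuous_const).sub
          (hNcont.comp (continuous_const.sub continuous_id)))
      have hgd : ∀ x : ℝ, x ≠ 0 → x ≠ t → HasDerivAt g 0 x := by
        intro x hx hxt
        have h1 := hrd t x hx (Ne.symm hxt)
        have h2 : HasDerivAt (fun x : ℝ => N (-x)) (ψ (-x) * -1) x :=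
          HasDerivAt.comp x (hNd (-x) (neg_ne_zero.mpr hx)) (hasDerivAt_id x).neg
        have h3 : HasDerivAt (fun x : ℝ => N (t - x)) (ψ (t - x) * -1) x :=
          HasDerivAt.comp x (hNd (t - x) (sub_ne_zero.mpr (Ne.symm hxt)))
            (HasDerivAt.const_sub t (hasDerivAt_id x))
        have h4 := h1.sub ((h2.add_const (N t)).sub h3)
        have hval : ψ (t - x) - ψ (-x) - (ψ (-x) * -1 - ψ (t - x) * -1) = 0 := by ring
        rw [hval] at h4
        exact h4
      have hg0 : g 0 = 0 := by
        simp only [hgdef]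
        rw [neg_zero, sub_zero, hax2 t, hN0]
        ring
      have conn : ∀ α β : ℝ, α < β → (∀ x ∈ Set.Ioo α β, x ≠ 0 ∧ x ≠ t) → g α = g β := by
        intro α β hab hgood
        obtain ⟨c, hc, hceq⟩ := exists_hasDerivAt_eq_slope g (fun _ => 0) hab
          hgc.continuousOn (fun x hx => hgd x (hgood x hx).1 (hgood x hx).2)
        have hne2 : β - α ≠ 0 := sub_ne_zero.mpr (ne_of_gt hab)
        have h0 : (g β - g α) / (β - α) = 0 := by simpa using hceq.symm
        have := (div_eq_zero_iff.mp h0).resolve_right hne2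
        linarith
      have key : g s = 0 := by
        rcases lt_trichotomy t 0 with htneg | hteq | htpos
        · rcases lt_trichotomy s 0 with hs | hs | hs
          · rcases le_or_gt t s with hle | hlt
            · exact (conn s 0 hs fun x hx =>
                ⟨ne_of_lt hx.2, ne_of_gt (lt_of_le_of_lt hle hx.1)⟩).trans hg0
            · exact (conn s t hlt fun x hx =>
                ⟨ne_of_lt (lt_trans hx.2 htneg), ne_of_lt hx.2⟩).trans
                ((conn t 0 htneg fun x hx => ⟨ne_of_lt hx.2, ne_of_gt hx.1⟩).trans hg0)
          · rw [hs]; exact hg0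
          · exact ((conn 0 s hs fun x hx =>
              ⟨ne_of_gt hx.1, ne_of_gt (lt_trans htneg hx.1)⟩).symm).trans hg0
        · exact absurd hteq ht
        · rcases lt_trichotomy s 0 with hs | hs | hs
          · exact (conn s 0 hs fun x hx =>
              ⟨ne_of_lt hx.2, ne_of_lt (lt_trans hx.2 htpos)⟩).trans hg0
          · rw [hs]; exact hg0
          · rcases le_or_gt s t with hle | hlt
            · exact ((conn 0 s hs fun x hx =>
                ⟨ne_of_gt hx.1, ne_of_lt (lt_of_lt_of_le hx.2 hle)⟩).symm).trans hg0
            · exact ((conn t s hlt fun x hx =>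
                ⟨ne_of_gt (lt_trans htpos hx.1), ne_of_gt hx.1⟩).symm).trans
                (((conn 0 t htpos fun x hx => ⟨ne_of_gt hx.1, ne_of_lt hx.2⟩).symm).trans hg0)
      simp only [hgdef] at key
      linarith
  -- final constant matching
  refine ⟨-κ / (σi * σj / 2 * H), a / (σi * σj / 2 * H), fun s t => ?_⟩
  have hσine : σi ≠ 0 := ne_of_gt hσi
  have hσjne : σj ≠ 0 := ne_of_gt hσj
  have hT : ∀ w : ℝ,
      σi * σj / 2 * ((if 0 < w then a / (σi * σj / 2 * H) else -κ / (σi * σj / 2 * H)) * |w| ^ H)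
        = N w := by
    intro w
    rcases lt_trichotomy w 0 with hw | hw | hw
    · rw [if_neg (not_lt.mpr hw.le), abs_of_neg hw, hNneg w hw]
      field_simp
    · rw [hw, if_neg (lt_irrefl 0), abs_zero, Real.zero_rpow hHne, hN0]
      ring
    · rw [if_pos hw, abs_of_pos hw, hNpos w hw]
      field_simp
  have hS : ∀ w : ℝ,
      σi * σj / 2 * ((if 0 < w then -κ / (σi * σj / 2 * H) else a / (σi * σj / 2 * H)) * |w| ^ H)
        = N (-w) := by
    intro w
    rcases lt_trichotomy w 0 with hw | hw | hw
    · rw [if_neg (not_lt.mpr hw.le), abs_of_neg hw, hNpos (-w) (by linarith)]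
      field_simp
    · rw [hw, if_neg (lt_irrefl 0), abs_zero, Real.zero_rpow hHne, neg_zero, hN0]
      ring
    · rw [if_pos hw, abs_of_pos hw, hNneg (-w) (by linarith), neg_neg]
      field_simp
  rw [main s t]
  have e1 := hS s
  have e2 := hT t
  have e3 := hT (t - s)
  linear_combination -e1 - e2 + e3
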